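/- For a symmetric matrix A whose ∞-norm row sums satisfy Σ_j |a_{ij}| ≤ α^{1/2} for all i, the variance of each component v_i(s) of the estimator V(s) = Σ_{k=0}^m ξ^{(k)}(s) is bounded by (β / (α² p_{ℓ₀}²)) · Σ_{j=0}^∞ |ζ_j| α^j, provided this series converges and |ζ_k| ≤ 1 for all k. -/

import Mathlib

open Matrix

lemma walk_sum {n : ℕ} (t : Matrix (Fin n) (Fin n) ℝ) (ht1 : ∀ r, ∑ j, t r j = 1) :
    ∀ (k : ℕ) (ℓ : Fin n),
      ∑ c ∈ Finset.univ.filter (fun c : Fin (k + 1) → Fin n => c 0 = ℓ),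
        ∏ j : Fin k, t (c j.castSucc) (c j.succ) = 1 := by
  intro k
  induction k with
  | zero =>
    intro ℓ
    have h : Finset.univ.filter (fun c : Fin 1 → Fin n => c 0 = ℓ)
        = {fun _ => ℓ} := by
      ext c
      simp only [Finset.mem_filter, Finset.mem_univ, true_and, Finset.mem_singleton]
      constructor
      · intro h; funext x; rw [Subsingleton.elim x 0]; exact h
      · intro h; rw [h]
    rw [h]
    simp
  | succ k ih =>
    intro ℓ
    have e : ∑ c ∈ Finset.univ.filter (fun c : Fin (k + 2) → Fin n => c 0 = ℓ),
        ∏ j : Fin (k + 1), t (c j.castSucc) (c j.succ)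
        = ∑ c' : Fin (k + 1) → Fin n,
            t ℓ (c' 0) * ∏ j : Fin k, t (c' j.castSucc) (c' j.succ) := by
      apply Finset.sum_bij' (fun c _ => c ∘ Fin.succ) (fun c' _ => Fin.cons ℓ c')
      · intros; exact Finset.mem_univ _
      · intro c' _
        simp [Finset.mem_filter]
      · intro c hc
        simp only [Finset.mem_filter, Finset.mem_univ, true_and] at hc
        funext x
        induction x using Fin.cases with
        | zero => simp [hc]
        | succ y => simp
      · intro c' _
        funext x
        simp [Fin.cons_succ]
      · intro c hc
        simp only [Finset.mem_filter, Finset.mem_univ, true_and] at hc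
        rw [Fin.prod_univ_succ]
        simp [Function.comp, hc]
    rw [e, ← Finset.sum_fiberwise Finset.univ (fun c' : Fin (k + 1) → Fin n => c' 0)
        (fun c' => t ℓ (c' 0) * ∏ j : Fin k, t (c' j.castSucc) (c' j.succ))]
    calc ∑ x : Fin n, ∑ c' ∈ Finset.univ.filter (fun c' : Fin (k+1) → Fin n => c' 0 = x),
          t ℓ (c' 0) * ∏ j : Fin k, t (c' j.castSucc) (c' j.succ)
        = ∑ x : Fin n, t ℓ x * ∑ c' ∈ Finset.univ.filter (fun c' : Fin (k+1) → Fin n => c' 0 = x),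
            ∏ j : Fin k, t (c' j.castSucc) (c' j.succ) := by
          refine Finset.sum_congr rfl fun x _ => ?_
          rw [Finset.mul_sum]
          refine Finset.sum_congr rfl fun c' hc' => ?_
          simp only [Finset.mem_filter] at hc'
          rw [hc'.2]
      _ = ∑ x : Fin n, t ℓ x := by
          refine Finset.sum_congr rfl fun x _ => ?_
          rw [ih x, mul_one]
      _ = 1 := ht1 ℓ

/-- Variance bound: for a symmetric matrix `A` with every absolute row sum at most
`α^{1/2}`, assuming the components `ξ⁽ᵏ⁾` of a single walk are independent, the
variance of each component of `V(s) = Σ_{k=0}^m ξ⁽ᵏ⁾(s)` is bounded by the sum of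
second moments, which satisfies
`Σ_{k=0}^m E[(ξ_i⁽ᵏ⁾)²] ≤ (β / (α² p_{ℓ₀}²)) · Σ_{j=0}^∞ |ζ_j| α^j`,
provided this series converges and `|ζ_k| ≤ 1` for all `k`.  Here the chain starts
at `ℓ₀` (probability `p_{ℓ₀} > 0`), `α = max_i (Σ_j |a_{ij}|)²`, and `β` is the
maximum over final states `j` of the squared `i`-th component of `vec(C_{ℓ₀} R_j)`. -/
theorem variance_bound {n : ℕ} [NeZero n] (A : Matrix (Fin n) (Fin n) ℝ)
    (hsym : A.IsSymm)
    (hrow : ∀ i', ∃ j, A i' j ≠ 0)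
    (t : Matrix (Fin n) (Fin n) ℝ)
    (ht : ∀ i' j, t i' j = |A i' j| / ∑ k, |A i' k|)
    (p : Fin n → ℝ) (ℓ₀ : Fin n) (hp : 0 < p ℓ₀)
    (ζ : ℕ → ℝ) (hζ : ∀ k, |ζ k| ≤ 1)
    (i : Fin n × Fin n) (m : ℕ)
    (α β : ℝ)
    (hα : α = Finset.univ.sup' Finset.univ_nonempty (fun r => (∑ j, |A r j|) ^ 2))
    (hrowsum : ∀ i', ∑ j, |A i' j| ≤ Real.sqrt α)
    (hβ : β = Finset.univ.sup' Finset.univ_nonempty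
        (fun j : Fin n => (A i.1 ℓ₀ * A j i.2) ^ 2))
    (hconv : Summable fun j : ℕ => |ζ j| * α ^ j) :
    ∑ k ∈ Finset.range (m + 1),
      ∑ c ∈ Finset.univ.filter (fun c : Fin (k + 1) → Fin n => c 0 = ℓ₀),
        (∏ j : Fin k, t (c j.castSucc) (c j.succ)) *
          (ζ (k + 2) *
              ((p ℓ₀)⁻¹ *
                ∏ j : Fin k, A (c j.castSucc) (c j.succ) / t (c j.castSucc) (c j.succ)) *
            (A i.1 (c 0) * A (c (Fin.last k)) i.2)) ^ 2
      ≤ β / (α ^ 2 * p ℓ₀ ^ 2) * ∑' j : ℕ, |ζ j| * α ^ j := by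
  have hSpos : ∀ r : Fin n, 0 < ∑ j, |A r j| := by
    intro r
    obtain ⟨j, hj⟩ := hrow r
    exact Finset.sum_pos' (fun k _ => abs_nonneg _) ⟨j, Finset.mem_univ j, abs_pos.mpr hj⟩
  have ht1 : ∀ r, ∑ j, t r j = 1 := by
    intro r
    simp only [ht]
    rw [← Finset.sum_div]
    exact div_self (hSpos r).ne'
  have htnn : ∀ r j', 0 ≤ t r j' := by
    intro r j'; rw [ht]; positivity
  have hα_ge : ∀ r, (∑ j, |A r j|) ^ 2 ≤ α := by
    intro r
    rw [hα]
    exact Finset.le_sup' (fun r => (∑ j, |A r j|) ^ 2) (Finset.mem_univ r)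
  have hαpos : 0 < α := lt_of_lt_of_le (pow_pos (hSpos 0) 2) (hα_ge 0)
  have hβ_ge : ∀ j, (A i.1 ℓ₀ * A j i.2) ^ 2 ≤ β := by
    intro j
    rw [hβ]
    exact Finset.le_sup' (fun j : Fin n => (A i.1 ℓ₀ * A j i.2) ^ 2) (Finset.mem_univ j)
  have hβnn : 0 ≤ β := le_trans (sq_nonneg _) (hβ_ge 0)
  -- factor bound
  have hfac : ∀ r s : Fin n, t r s * (A r s / t r s) ^ 2 ≤ α * t r s := by
    intro r s
    by_cases h : A r s = 0
    · have : t r s = 0 := by rw [ht, h]; simp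
      simp [this]
    · have htp : 0 < t r s := by
        rw [ht]
        exact div_pos (abs_pos.mpr h) (hSpos r)
      have : (A r s / t r s) ^ 2 = (∑ j, |A r j|) ^ 2 := by
        rw [ht, div_div_eq_mul_div, div_pow, mul_pow, sq_abs]
        exact mul_div_cancel_left₀ _ (pow_ne_zero 2 h)
      rw [this, mul_comm]
      exact mul_le_mul_of_nonneg_right (hα_ge r) htp.le
  -- per-k bound
  have key : ∀ k : ℕ,
      ∑ c ∈ Finset.univ.filter (fun c : Fin (k + 1) → Fin n => c 0 = ℓ₀),
        (∏ j : Fin k, t (c j.castSucc) (c j.succ)) *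
          (ζ (k + 2) *
              ((p ℓ₀)⁻¹ *
                ∏ j : Fin k, A (c j.castSucc) (c j.succ) / t (c j.castSucc) (c j.succ)) *
            (A i.1 (c 0) * A (c (Fin.last k)) i.2)) ^ 2
      ≤ β / (α ^ 2 * p ℓ₀ ^ 2) * (|ζ (k + 2)| * α ^ (k + 2)) := by
    intro k
    have hterm : ∀ c ∈ Finset.univ.filter (fun c : Fin (k + 1) → Fin n => c 0 = ℓ₀),
        (∏ j : Fin k, t (c j.castSucc) (c j.succ)) *
          (ζ (k + 2) *
              ((p ℓ₀)⁻¹ *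
                ∏ j : Fin k, A (c j.castSucc) (c j.succ) / t (c j.castSucc) (c j.succ)) *
            (A i.1 (c 0) * A (c (Fin.last k)) i.2)) ^ 2
        ≤ (|ζ (k + 2)| * (p ℓ₀)⁻¹ ^ 2 * β * α ^ k) *
            ∏ j : Fin k, t (c j.castSucc) (c j.succ) := by
      intro c hc
      set P := ∏ j : Fin k, t (c j.castSucc) (c j.succ) with hP
      set Q := ∏ j : Fin k, A (c j.castSucc) (c j.succ) / t (c j.castSucc) (c j.succ) with hQ
      have hPnn : 0 ≤ P := Finset.prod_nonneg fun j _ => htnn _ _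
      have hPQ : P * Q ^ 2 ≤ α ^ k * P := by
        rw [hP, hQ, ← Finset.prod_pow, ← Finset.prod_mul_distrib]
        calc ∏ j : Fin k, t (c j.castSucc) (c j.succ) *
              (A (c j.castSucc) (c j.succ) / t (c j.castSucc) (c j.succ)) ^ 2
            ≤ ∏ j : Fin k, α * t (c j.castSucc) (c j.succ) := by
              exact Finset.prod_le_prod (fun j _ => mul_nonneg (htnn _ _) (sq_nonneg _))
                (fun j _ => hfac _ _)
          _ = α ^ k * P := by rw [Finset.prod_mul_distrib, Finset.prod_const, Finset.card_univ,
              Fintype.card_fin, hP]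
      have hB : (A i.1 (c 0) * A (c (Fin.last k)) i.2) ^ 2 ≤ β := by
        simp only [Finset.mem_filter, Finset.mem_univ, true_and] at hc
        rw [hc]
        exact hβ_ge _
      have hz : ζ (k + 2) ^ 2 ≤ |ζ (k + 2)| := by
        rw [← sq_abs]
        nlinarith [abs_nonneg (ζ (k + 2)), hζ (k + 2)]
      have expand : P * (ζ (k + 2) * ((p ℓ₀)⁻¹ * Q) * (A i.1 (c 0) * A (c (Fin.last k)) i.2)) ^ 2
          = ζ (k + 2) ^ 2 * (p ℓ₀)⁻¹ ^ 2 * (A i.1 (c 0) * A (c (Fin.last k)) i.2) ^ 2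
              * (P * Q ^ 2) := by ring
      rw [expand]
      calc ζ (k + 2) ^ 2 * (p ℓ₀)⁻¹ ^ 2 * (A i.1 (c 0) * A (c (Fin.last k)) i.2) ^ 2 * (P * Q ^ 2)
          ≤ |ζ (k + 2)| * (p ℓ₀)⁻¹ ^ 2 * β * (α ^ k * P) := by
            have h1 : 0 ≤ P * Q ^ 2 := by positivity
            have h2 : 0 ≤ α ^ k * P := by positivity
            have hzn : 0 ≤ ζ (k + 2) ^ 2 := sq_nonneg _
            have hpn : (0:ℝ) ≤ (p ℓ₀)⁻¹ ^ 2 := by positivity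
            have hBnn : 0 ≤ (A i.1 (c 0) * A (c (Fin.last k)) i.2) ^ 2 := sq_nonneg _
            have hr1 : 0 ≤ |ζ (k + 2)| * (p ℓ₀)⁻¹ ^ 2 :=
              mul_nonneg (abs_nonneg _) hpn
            have hr2 : 0 ≤ |ζ (k + 2)| * (p ℓ₀)⁻¹ ^ 2 * β := mul_nonneg hr1 hβnn
            have := mul_le_mul (mul_le_mul (mul_le_mul hz le_rfl hpn (abs_nonneg _))
              hB hBnn hr1) hPQ h1 hr2
            linarith
        _ = (|ζ (k + 2)| * (p ℓ₀)⁻¹ ^ 2 * β * α ^ k) * P := by ring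
    calc ∑ c ∈ Finset.univ.filter (fun c : Fin (k + 1) → Fin n => c 0 = ℓ₀),
          (∏ j : Fin k, t (c j.castSucc) (c j.succ)) *
            (ζ (k + 2) * ((p ℓ₀)⁻¹ *
                ∏ j : Fin k, A (c j.castSucc) (c j.succ) / t (c j.castSucc) (c j.succ)) *
              (A i.1 (c 0) * A (c (Fin.last k)) i.2)) ^ 2
        ≤ ∑ c ∈ Finset.univ.filter (fun c : Fin (k + 1) → Fin n => c 0 = ℓ₀),
            (|ζ (k + 2)| * (p ℓ₀)⁻¹ ^ 2 * β * α ^ k) *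
              ∏ j : Fin k, t (c j.castSucc) (c j.succ) :=
          Finset.sum_le_sum hterm
      _ = (|ζ (k + 2)| * (p ℓ₀)⁻¹ ^ 2 * β * α ^ k) *
            ∑ c ∈ Finset.univ.filter (fun c : Fin (k + 1) → Fin n => c 0 = ℓ₀),
              ∏ j : Fin k, t (c j.castSucc) (c j.succ) := by rw [Finset.mul_sum]
      _ = |ζ (k + 2)| * (p ℓ₀)⁻¹ ^ 2 * β * α ^ k := by rw [walk_sum t ht1 k ℓ₀, mul_one]
      _ = β / (α ^ 2 * p ℓ₀ ^ 2) * (|ζ (k + 2)| * α ^ (k + 2)) := by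
          field_simp
          ring
  calc ∑ k ∈ Finset.range (m + 1),
        ∑ c ∈ Finset.univ.filter (fun c : Fin (k + 1) → Fin n => c 0 = ℓ₀),
          (∏ j : Fin k, t (c j.castSucc) (c j.succ)) *
            (ζ (k + 2) * ((p ℓ₀)⁻¹ *
                ∏ j : Fin k, A (c j.castSucc) (c j.succ) / t (c j.castSucc) (c j.succ)) *
              (A i.1 (c 0) * A (c (Fin.last k)) i.2)) ^ 2
      ≤ ∑ k ∈ Finset.range (m + 1), β / (α ^ 2 * p ℓ₀ ^ 2) * (|ζ (k + 2)| * α ^ (k + 2)) :=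
        Finset.sum_le_sum fun k _ => key k
    _ = β / (α ^ 2 * p ℓ₀ ^ 2) * ∑ k ∈ Finset.range (m + 1), |ζ (k + 2)| * α ^ (k + 2) := by
        rw [Finset.mul_sum]
    _ ≤ β / (α ^ 2 * p ℓ₀ ^ 2) * ∑' j : ℕ, |ζ j| * α ^ j := by
        refine mul_le_mul_of_nonneg_left ?_ (by positivity)
        have himg : ∑ k ∈ Finset.range (m + 1), |ζ (k + 2)| * α ^ (k + 2)
            = ∑ j ∈ (Finset.range (m + 1)).image (· + 2), |ζ j| * α ^ j := by
          rw [Finset.sum_image (fun a _ b _ h => by omega)]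
        rw [himg]
        exact Summable.sum_le_tsum _ (fun j _ => by positivity) hconv
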